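/- Let G be a compact Lie group acting on each space X_r of an inverse system ⋯ → X_{r+1} → X_r → ⋯ → X_1 of G-equivariant continuous maps. Then the natural map (lim← X_r)/G → lim← (X_r/G), [(…,x_2,x_1)] ↦ (…,[x_2],[x_1]), is a bijection. -/

import Mathlib

/-- Let `G` be a compact Lie group acting continuously on each space of an inverse
system `⋯ → X_{r+1} → X_r → ⋯` of `G`-equivariant continuous maps between Hausdorff
spaces. Then the natural map `(lim← X_r)/G → lim← (X_r/G)` is a bijection:
(injectivity) two compatible sequences whose terms are pairwise in the same orbit
lie in the same orbit for the diagonal action, and (surjectivity) every compatible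
sequence of orbits is the image of a compatible sequence of points. -/
theorem stmt14 {E : Type*} [NormedAddCommGroup E] [NormedSpace ℝ E]
    [FiniteDimensional ℝ E]
    {H : Type*} [TopologicalSpace H] (I : ModelWithCorners ℝ E H)
    {G : Type*} [TopologicalSpace G] [ChartedSpace H G] [Group G]
    [LieGroup I (⊤ : ℕ∞) G] [CompactSpace G]
    (X : ℕ → Type*) [∀ r, TopologicalSpace (X r)] [∀ r, T2Space (X r)]
    [∀ r, MulAction G (X r)] [∀ r, ContinuousSMul G (X r)]
    (f : ∀ r, X (r + 1) → X r) (hfc : ∀ r, Continuous (f r))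
    (hfe : ∀ (r : ℕ) (g : G) (x : X (r + 1)), f r (g • x) = g • f r x) :
    (∀ x x' : ∀ r, X r, (∀ r, f r (x (r + 1)) = x r) →
        (∀ r, f r (x' (r + 1)) = x' r) →
        (∀ r, ∃ g : G, g • x r = x' r) → ∃ g : G, ∀ r, g • x r = x' r) ∧
      (∀ y : ∀ r, X r, (∀ r, ∃ g : G, g • f r (y (r + 1)) = y r) →
        ∃ x : ∀ r, X r, (∀ r, f r (x (r + 1)) = x r) ∧
          ∀ r, ∃ g : G, g • x r = y r) := by
  constructor
  · intro x x' hx hx' horb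
    set Z : ℕ → Set G := fun r => {g : G | g • x r = x' r} with hZ
    have hcl : ∀ r, IsClosed (Z r) := fun r =>
      isClosed_eq (continuous_id.smul continuous_const) continuous_const
    have hsub : ∀ r, Z (r + 1) ⊆ Z r := by
      intro r g hg
      simp only [hZ, Set.mem_setOf_eq] at hg ⊢
      rw [← hx r, ← hfe, hg, hx']
    have hne : ∀ r, (Z r).Nonempty := fun r => horb r
    obtain ⟨g, hg⟩ := IsCompact.nonempty_iInter_of_sequence_nonempty_isCompact_isClosed
      Z hsub hne ((hcl 0).isCompact) hcl
    exact ⟨g, fun r => Set.mem_iInter.mp hg r⟩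
  · intro y hy
    choose g hg using hy
    set c : ℕ → G := fun r => ((List.range r).map g).prod with hc
    have hcsucc : ∀ r, c (r + 1) = c r * g r := by
      intro r
      simp [hc, List.range_succ]
    refine ⟨fun r => c r • y r, ?_, fun r => ⟨(c r)⁻¹, by simp⟩⟩
    intro r
    rw [hfe, hcsucc r, mul_smul, hg r]
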